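/- Let L/K be a quadratic field extension, V an n-dimensional L-vector space with n > 2, and g_1, ..., g_{n+1} pseudoreflections generating an irreducible subgroup whose product is the scalar λ_0 ≠ 1, with det(g_i) = λ_0 λ_i where no λ_0 λ_i equals 1. If the image of the generated group is contained (after conjugation) in L^× · GL_n(K'), for a subfield K' of L, and the nontrivial eigenvalue 1 has different multiplicity from other eigenvalues of each g_i, then all parameters λ_0 λ_i and λ_0 lie in K'. In particular if the λ_i generate L over K then K' = L. -/

import Mathlib

open Matrix Polynomial

namespace JPaux

section RankLemmas

variable {F : Type*} [Field F]

theorem exists_li_comp {ι κ : Type*} [Fintype ι] [Fintype κ]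
    (v : ι → (κ → F)) (r : ℕ)
    (h : Module.finrank F (Submodule.span F (Set.range v)) = r) :
    ∃ s : Fin r → ι, LinearIndependent F (v ∘ s) := by
  classical
  obtain ⟨b, hbsub, hbspan, hbind⟩ := exists_linearIndependent F (Set.range v)
  have hfin : b.Finite := (Set.finite_range v).subset hbsub
  haveI : Fintype b := hfin.fintype
  have hcard : b.toFinset.card = r := by
    rw [← finrank_span_set_eq_card hbind, hbspan]; exact h
  have hcard' : Fintype.card b = r := by rwa [Set.toFinset_card] at hcard
  let e : Fin r ≃ b := (Fintype.equivFinOfCardEq hcard').symm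
  choose idx hidx using fun (x : b) => hbsub x.2
  refine ⟨fun j => idx (e j), ?_⟩
  have hve : (v ∘ fun j => idx (e j)) = (fun x : b => (x : κ → F)) ∘ e := by
    funext j; simp [Function.comp, hidx]
  rw [show v ∘ (fun j => idx (e j)) = (fun x : b => (x : κ → F)) ∘ e from hve]
  exact hbind.comp e e.injective

theorem le_rank_of_det_submatrix {m n r : ℕ} (A : Matrix (Fin m) (Fin n) F)
    (rows : Fin r → Fin m) (cols : Fin r → Fin n)
    (h : (A.submatrix rows cols).det ≠ 0) : r ≤ A.rank := by
  have hu : IsUnit (A.submatrix rows cols) :=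
    (Matrix.isUnit_iff_isUnit_det _).mpr (isUnit_iff_ne_zero.mpr h)
  have h1 : A.submatrix id cols = A * ((1 : Matrix (Fin n) (Fin n) F).submatrix id cols) := by
    have := Matrix.submatrix_mul A (1 : Matrix (Fin n) (Fin n) F) id id cols
      Function.bijective_id
    simpa using this
  have h2 : A.submatrix rows cols =
      ((1 : Matrix (Fin m) (Fin m) F).submatrix rows id) * (A.submatrix id cols) := by
    have := Matrix.submatrix_mul (1 : Matrix (Fin m) (Fin m) F) A rows id cols
      Function.bijective_id
    simpa using this
  have hrk : (A.submatrix rows cols).rank = r := by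
    rw [Matrix.rank_of_isUnit _ hu, Fintype.card_fin]
  calc r = (A.submatrix rows cols).rank := hrk.symm
    _ ≤ (A.submatrix id cols).rank := by rw [h2]; exact Matrix.rank_mul_le_right _ _
    _ ≤ A.rank := by rw [h1]; exact Matrix.rank_mul_le_left _ _


theorem exists_det_submatrix {m n : ℕ} (A : Matrix (Fin m) (Fin n) F) :
    ∃ (rows : Fin A.rank → Fin m) (cols : Fin A.rank → Fin n),
      (A.submatrix rows cols).det ≠ 0 := by
  obtain ⟨cols, hcols⟩ := exists_li_comp (fun j => Aᵀ j) A.rank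
    (by rw [Matrix.rank_eq_finrank_span_cols]; rfl)
  set B : Matrix (Fin m) (Fin A.rank) F := A.submatrix id cols with hB
  have h2 : Bᵀ.rank = A.rank := by
    have hli : LinearIndependent F (fun i => Bᵀ i) := hcols
    rw [LinearIndependent.rank_matrix (M := Bᵀ) hli, Fintype.card_fin]
  have h3 : Module.finrank F (Submodule.span F (Set.range (fun i => B i))) = A.rank := by
    exact ((Matrix.rank_eq_finrank_span_row B).symm.trans (Matrix.rank_transpose B).symm).trans h2
  obtain ⟨rows, hrows⟩ := exists_li_comp (fun i => B i) A.rank h3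
  refine ⟨rows, cols, ?_⟩
  have hli : LinearIndependent F (fun i => (A.submatrix rows cols) i) := hrows
  have hu : IsUnit (A.submatrix rows cols) := Matrix.linearIndependent_rows_iff_isUnit.mp hli
  have := (Matrix.isUnit_iff_isUnit_det _).mp hu
  exact this.ne_zero

theorem rank_map_field {E : Type*} [Field E] (f : F →+* E) {m n : ℕ}
    (A : Matrix (Fin m) (Fin n) F) : (A.map f).rank = A.rank := by
  apply le_antisymm
  · obtain ⟨rows, cols, h⟩ := exists_det_submatrix (A.map f)
    refine le_rank_of_det_submatrix A rows cols fun h0 => h ?_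
    have he : (A.map f).submatrix rows cols = f.mapMatrix (A.submatrix rows cols) := rfl
    rw [he, ← RingHom.map_det, h0, map_zero]
  · obtain ⟨rows, cols, h⟩ := exists_det_submatrix A
    refine le_rank_of_det_submatrix (A.map f) rows cols ?_
    have he : (A.map f).submatrix rows cols = f.mapMatrix (A.submatrix rows cols) := rfl
    rw [he, ← RingHom.map_det]
    exact fun h0 => h (f.injective (by rwa [map_zero]))


theorem rank_smul_ne_zero {n : ℕ} (A : Matrix (Fin n) (Fin n) F) {c : F} (hc : c ≠ 0) :
    (c • A).rank = A.rank := by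
  have h1 : c • A = (c • (1 : Matrix (Fin n) (Fin n) F)) * A := by
    rw [Matrix.smul_mul, one_mul]
  rw [h1, Matrix.rank_mul_eq_right_of_isUnit_det]
  rw [det_smul, det_one, mul_one]
  exact isUnit_iff_ne_zero.mpr (pow_ne_zero _ hc)

theorem quad_identity {n : ℕ} (h : Matrix (Fin n) (Fin n) F)
    (hrank : (h - 1).rank = 1) (d : F) (hdet : h.det = d) :
    (h - 1) * (h - d • 1) = 0 := by
  classical
  set B := h - 1 with hB
  have hfr : Module.finrank F (LinearMap.range B.mulVecLin) = 1 := hrank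
  obtain ⟨v, hv0, hv⟩ := (finrank_eq_one_iff' (K := F)
    (V := LinearMap.range B.mulVecLin)).mp hfr
  set u : Fin n → F := (v : Fin n → F) with hu
  have hcol : ∀ b, (fun a => B a b) ∈ LinearMap.range B.mulVecLin := by
    intro b
    refine ⟨Pi.single b 1, ?_⟩
    ext a
    simp [Matrix.mulVecLin_apply, Matrix.mulVec_single]
  choose w hw using fun b => hv ⟨_, hcol b⟩
  have hBab : ∀ a b, B a b = w b * u a := by
    intro a b
    have := congrArg Subtype.val (hw b)
    exact (congrFun this a).symm
  set α : F := ∑ k, w k * u k with hα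
  have hBB : B * B = α • B := by
    ext a b
    simp only [Matrix.mul_apply, Matrix.smul_apply, smul_eq_mul]
    calc (∑ k, B a k * B k b) = ∑ k, (w k * u k) * (w b * u a) := by
          refine Finset.sum_congr rfl fun k _ => ?_
          rw [hBab a k, hBab k b]; ring
      _ = α * (w b * u a) := by rw [← Finset.sum_mul]
      _ = α * B a b := by rw [hBab a b]
  have hform : h = 1 + Matrix.replicateCol Unit u * Matrix.replicateRow Unit w := by
    ext a b
    have : (Matrix.replicateCol Unit u * Matrix.replicateRow Unit w) a b = u a * w b := by
      simp [Matrix.mul_apply]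
    rw [Matrix.add_apply, this]
    have := hBab a b
    have hB' : h a b = B a b + (1 : Matrix (Fin n) (Fin n) F) a b := by
      rw [hB]; simp
    rw [hB', this]; ring
  have hdet' : d = 1 + α := by
    rw [← hdet, hform, Matrix.det_one_add_replicateCol_mul_replicateRow]
    simp [dotProduct, hα]
  have hsplit : h - d • 1 = B + ((1 : F) - d) • 1 := by
    rw [hB]
    ext a b
    simp [Matrix.sub_apply, Matrix.add_apply, Matrix.smul_apply, sub_smul]
  rw [hsplit, mul_add, hBB, Matrix.mul_smul, mul_one, ← add_smul]
  have : α + (1 - d) = 0 := by rw [hdet']; ring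
  rw [this, zero_smul]



end RankLemmas

section KeyLemmas

variable {L : Type*} [Field L]

-- rank of (h - d•1) is n - 1
theorem rank_second {n : ℕ} (hn : 2 < n) (h : Matrix (Fin n) (Fin n) L)
    (hrank : (h - 1).rank = 1) (d : L) (hdet : h.det = d) (hd1 : d ≠ 1) :
    (h - d • 1).rank = n - 1 := by
  classical
  have hq := quad_identity h hrank d hdet
  have hle : (h - 1).rank + (h - d • 1).rank ≤ n := by
    have := Matrix.rank_add_rank_le_card_of_mul_eq_zero hq
    simpa using this
  -- kernels
  set f1 := (h - 1).mulVecLin with hf1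
  set f2 := (h - d • 1).mulVecLin with hf2
  have e1 : (h - 1).rank + Module.finrank L (LinearMap.ker f1) = n := by
    have := LinearMap.finrank_range_add_finrank_ker f1
    rwa [Module.finrank_fintype_fun_eq_card, Fintype.card_fin] at this
  have e2 : (h - d • 1).rank + Module.finrank L (LinearMap.ker f2) = n := by
    have := LinearMap.finrank_range_add_finrank_ker f2
    rwa [Module.finrank_fintype_fun_eq_card, Fintype.card_fin] at this
  have hdisj : LinearMap.ker f1 ⊓ LinearMap.ker f2 = ⊥ := by
    rw [Submodule.eq_bot_iff]
    rintro v ⟨hv1, hv2⟩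
    rw [SetLike.mem_coe, LinearMap.mem_ker] at hv1 hv2
    rw [hf1, Matrix.mulVecLin_apply, Matrix.sub_mulVec, Matrix.one_mulVec,
      sub_eq_zero] at hv1
    rw [hf2, Matrix.mulVecLin_apply, Matrix.sub_mulVec, Matrix.smul_mulVec,
      Matrix.one_mulVec, sub_eq_zero] at hv2
    have : (d - 1) • v = 0 := by
      rw [sub_smul, one_smul]
      rw [← hv2, hv1, sub_self]
    rcases smul_eq_zero.mp this with h' | h'
    · exact absurd (sub_eq_zero.mp h') hd1
    · exact h'
  have hsum : Module.finrank L (LinearMap.ker f1) + Module.finrank L (LinearMap.ker f2) ≤ n := by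
    have := Submodule.finrank_sup_add_finrank_inf_eq (LinearMap.ker f1) (LinearMap.ker f2)
    rw [hdisj, finrank_bot, add_zero] at this
    have hle' : Module.finrank L ↥(LinearMap.ker f1 ⊔ LinearMap.ker f2) ≤ n := by
      have := Submodule.finrank_le (LinearMap.ker f1 ⊔ LinearMap.ker f2 : Submodule L (Fin n → L))
      rwa [Module.finrank_fintype_fun_eq_card, Fintype.card_fin] at this
    omega
  omega


-- the contradiction branch
theorem not_irrational_case {n : ℕ} (hn : 2 < n) (K' : Subfield L)
    (M : Matrix (Fin n) (Fin n) L) (hM : ∀ a b, M a b ∈ K')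
    (x y : L) (hxy : x ≠ y) (hxK : x ∉ K')
    (hs : x + y ∈ K') (hp : x * y ∈ K')
    (hr1 : (M - x • 1).rank = 1) (hr2 : (M - y • 1).rank = n - 1) : False := by
  classical
  set s' : K' := ⟨x + y, hs⟩ with hs'
  set p' : K' := ⟨x * y, hp⟩ with hp'
  set q : Polynomial K' := X ^ 2 - C s' * X + C p' with hq
  have hq_nat : q.natDegree = 2 := by
    rw [hq]
    compute_degree!
  have hq_monic : q.Monic := by
    rw [hq]
    monicity!
  have hq_ne : q ≠ 0 := hq_monic.ne_zero
  have hfactor : ∀ z : L, z ^ 2 - (x + y) * z + x * y = (z - x) * (z - y) := by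
    intro z; ring
  have hroots : q.roots = 0 := by
    by_contra hne
    obtain ⟨r, hr⟩ := Multiset.exists_mem_of_ne_zero hne
    have hroot : q.IsRoot r := (mem_roots hq_ne).mp hr
    have heval : (r : L) ^ 2 - (x + y) * r + x * y = 0 := by
      have h0 : q.eval r = 0 := hroot
      have h1 : ((q.eval r : K') : L) = 0 := by rw [h0]; rfl
      rw [hq] at h1
      simpa [hs', hp', sub_mul, pow_two] using h1
    rw [hfactor] at heval
    rcases mul_eq_zero.mp heval with h' | h'
    · exact hxK (sub_eq_zero.mp h' ▸ r.2)
    · have : (r : L) = y := sub_eq_zero.mp h'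
      have hxval : x = ((s' - r : K') : L) := by
        push_cast [hs']
        rw [this]; ring
      exact hxK (hxval ▸ (s' - r).2)
  have hirr : Irreducible q :=
    (hq_monic.irreducible_iff_roots_eq_zero_of_degree_le_three
      (by omega) (by omega)).mpr hroots
  haveI := Fact.mk hirr
  set E := AdjoinRoot q with hE
  have heval_x : q.eval₂ (K'.subtype) x = 0 := by
    rw [hq]
    simp only [eval₂_add, eval₂_sub, eval₂_mul, eval₂_pow, eval₂_X, eval₂_C]
    have : (K'.subtype s') = x + y := rfl
    have hps : (K'.subtype p') = x * y := rfl
    rw [this, hps]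
    ring
  have heval_y : q.eval₂ (K'.subtype) y = 0 := by
    rw [hq]
    simp only [eval₂_add, eval₂_sub, eval₂_mul, eval₂_pow, eval₂_X, eval₂_C]
    have : (K'.subtype s') = x + y := rfl
    have hps : (K'.subtype p') = x * y := rfl
    rw [this, hps]
    ring
  set φ : E →+* L := AdjoinRoot.lift (K'.subtype) x heval_x with hφ
  set ψ : E →+* L := AdjoinRoot.lift (K'.subtype) y heval_y with hψ
  set M₀ : Matrix (Fin n) (Fin n) K' := fun a b => ⟨M a b, hM a b⟩ with hM₀
  set A : Matrix (Fin n) (Fin n) E :=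
    M₀.map (AdjoinRoot.of q) - (AdjoinRoot.root q) • 1 with hA
  have hone : ∀ (f : E →+* L) (z : L), f (AdjoinRoot.root q) = z →
      ∀ a b : Fin n, f ((AdjoinRoot.root q • (1 : Matrix (Fin n) (Fin n) E)) a b)
        = (z • (1 : Matrix (Fin n) (Fin n) L)) a b := by
    intro f z hz a b
    rw [Matrix.smul_apply, smul_eq_mul, _root_.map_mul, hz, Matrix.smul_apply, smul_eq_mul]
    congr 1
    by_cases hab : a = b
    · subst hab; simp
    · simp [Matrix.one_apply_ne hab]
  have hmapφ : A.map φ = M - x • 1 := by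
    ext a b
    rw [Matrix.map_apply, hA, Matrix.sub_apply, map_sub, Matrix.sub_apply]
    congr 1
    · rw [Matrix.map_apply]; exact AdjoinRoot.lift_of heval_x
    · exact hone φ x (AdjoinRoot.lift_root heval_x) a b
  have hmapψ : A.map ψ = M - y • 1 := by
    ext a b
    rw [Matrix.map_apply, hA, Matrix.sub_apply, map_sub, Matrix.sub_apply]
    congr 1
    · rw [Matrix.map_apply]; exact AdjoinRoot.lift_of heval_y
    · exact hone ψ y (AdjoinRoot.lift_root heval_y) a b
  have hrkφ : (A.map φ).rank = A.rank := rank_map_field φ A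
  have hrkψ : (A.map ψ).rank = A.rank := rank_map_field ψ A
  rw [hmapφ, hr1] at hrkφ
  rw [hmapψ, hr2] at hrkψ
  omega


theorem key {n : ℕ} (hn : 2 < n) (K' : Subfield L)
    (h M : Matrix (Fin n) (Fin n) L) (c d : L)
    (hM : ∀ a b, M a b ∈ K') (hcM : h = c • M)
    (hrank : (h - 1).rank = 1) (hdet : h.det = d)
    (hd1 : d ≠ 1) (hd0 : d ≠ 0) :
    c ∈ K' ∧ d ∈ K' := by
  classical
  haveI : NeZero n := ⟨by omega⟩
  have hc0 : c ≠ 0 := by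
    intro hc
    apply hd0
    rw [← hdet, hcM, hc, zero_smul]
    simp [Matrix.det_zero]
  set x : L := c⁻¹ with hxdef
  set y : L := d * c⁻¹ with hydef
  have hx0 : x ≠ 0 := inv_ne_zero hc0
  have hMx : M - x • 1 = c⁻¹ • (h - 1) := by
    rw [hcM, smul_sub, smul_smul, inv_mul_cancel₀ hc0, one_smul]
  have hMy : M - y • 1 = c⁻¹ • (h - d • 1) := by
    rw [hcM, smul_sub, smul_smul, inv_mul_cancel₀ hc0, one_smul, smul_smul, mul_comm]
  have hquad := quad_identity h hrank d hdet
  have hquadM : (M - x • 1) * (M - y • 1) = 0 := by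
    rw [hMx, hMy, Matrix.smul_mul, Matrix.mul_smul, hquad, smul_zero, smul_zero]
  have hr1 : (M - x • 1).rank = 1 := by
    rw [hMx, rank_smul_ne_zero _ (inv_ne_zero hc0), hrank]
  have hr2 : (M - y • 1).rank = n - 1 := by
    rw [hMy, rank_smul_ne_zero _ (inv_ne_zero hc0)]
    exact rank_second hn h hrank d hdet hd1
  have hxy : x ≠ y := by
    intro hxy
    apply hd1
    have h' : c⁻¹ = d * c⁻¹ := hxy
    field_simp at h'
    exact h'.symm
  have hxK : x ∈ K' := by
    by_contra hxK
    have hsp : (x + y) ∈ K' ∧ (x * y) ∈ K' := by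
      by_cases hdiag : ∃ a b, a ≠ b ∧ M a b ≠ 0
      · obtain ⟨a, b, hab, hMab⟩ := hdiag
        have hexp : M * M = (x + y) • M - (x * y) • 1 := by
          have h1 : (M - x • 1) * (M - y • 1)
              = M * M - (x + y) • M + (x * y) • 1 := by
            simp only [sub_mul, mul_sub, Matrix.smul_mul, Matrix.mul_smul, one_mul, mul_one,
              smul_smul, add_smul]
            rw [mul_comm y x]
            abel
          have h2 : M * M - (x + y) • M + (x * y) • 1 = 0 := by rw [← h1]; exact hquadM
          calc M * M = (M * M - (x + y) • M + (x * y) • 1)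
                + ((x + y) • M - (x * y) • 1) := by abel
            _ = (x + y) • M - (x * y) • 1 := by rw [h2, zero_add]
        have hsK : (x + y) ∈ K' := by
          have hent : (M * M) a b = (x + y) * M a b := by
            have h3 := congrArg (fun Z => Z a b) hexp
            simp only [Matrix.sub_apply, Matrix.smul_apply, smul_eq_mul] at h3
            rw [Matrix.one_apply_ne hab, mul_zero, sub_zero] at h3
            exact h3
          have hMMab : (M * M) a b ∈ K' := by
            rw [Matrix.mul_apply]
            exact Subfield.sum_mem _ fun k _ => Subfield.mul_mem _ (hM a k) (hM k b)
          have h4 : (x + y) = (M * M) a b * (M a b)⁻¹ := by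
            rw [hent]; field_simp
          rw [h4]
          exact Subfield.mul_mem _ hMMab (Subfield.inv_mem _ (hM a b))
        refine ⟨hsK, ?_⟩
        have hent : (M * M) a a = (x + y) * M a a - (x * y) := by
          have h3 := congrArg (fun Z => Z a a) hexp
          simp only [Matrix.sub_apply, Matrix.smul_apply, smul_eq_mul] at h3
          rw [Matrix.one_apply_eq, mul_one] at h3
          exact h3
        have hMMaa : (M * M) a a ∈ K' := by
          rw [Matrix.mul_apply]
          exact Subfield.sum_mem _ fun k _ => Subfield.mul_mem _ (hM a k) (hM k a)
        have h4 : (x * y) = (x + y) * M a a - (M * M) a a := by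
          rw [hent]; ring
        rw [h4]
        exact Subfield.sub_mem _ (Subfield.mul_mem _ hsK (hM a a)) hMMaa
      · exfalso
        push_neg at hdiag
        have hdetMx : (M - x • 1).det = 0 := by
          by_contra hne
          have hu : IsUnit (M - x • 1) :=
            (Matrix.isUnit_iff_isUnit_det _).mpr (isUnit_iff_ne_zero.mpr hne)
          have := Matrix.rank_of_isUnit _ hu
          rw [hr1, Fintype.card_fin] at this
          omega
        have hdiagform : M - x • 1 = Matrix.diagonal (fun a => M a a - x) := by
          ext a b
          by_cases hab : a = b
          · subst hab; simp [Matrix.diagonal]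
          · simp [Matrix.diagonal, hab, hdiag a b hab, Matrix.one_apply_ne hab]
        rw [hdiagform, Matrix.det_diagonal] at hdetMx
        obtain ⟨a, -, ha⟩ := Finset.prod_eq_zero_iff.mp hdetMx
        have hxa : x = M a a := (sub_eq_zero.mp ha).symm
        exact hxK (hxa ▸ hM a a)
    exact not_irrational_case hn K' M hM x y hxy hxK hsp.1 hsp.2 hr1 hr2
  have hyK : y ∈ K' := by
    set N := M - x • 1 with hN
    have hNmem : ∀ a b, N a b ∈ K' := by
      intro a b
      rw [hN, Matrix.sub_apply, Matrix.smul_apply, smul_eq_mul]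
      refine Subfield.sub_mem _ (hM a b) (Subfield.mul_mem _ hxK ?_)
      by_cases hab : a = b
      · subst hab; rw [Matrix.one_apply_eq]; exact Subfield.one_mem _
      · rw [Matrix.one_apply_ne hab]; exact Subfield.zero_mem _
    have hNne : N ≠ 0 := by
      intro h0
      have := hr1
      rw [h0, Matrix.rank_zero] at this
      exact one_ne_zero this.symm
    obtain ⟨a, b, hab⟩ : ∃ a b, N a b ≠ 0 := by
      by_contra hco; push_neg at hco
      exact hNne (by ext a b; simpa using hco a b)
    have hNM : N * M = y • N := by
      have h2 : N * (M - y • 1) = 0 := hquadM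
      rw [mul_sub, Matrix.mul_smul, mul_one, sub_eq_zero] at h2
      exact h2
    have hent : (N * M) a b = y * N a b := by rw [hNM, Matrix.smul_apply, smul_eq_mul]
    have hNMmem : (N * M) a b ∈ K' := by
      rw [Matrix.mul_apply]
      exact Subfield.sum_mem _ fun k _ => Subfield.mul_mem _ (hNmem a k) (hM k b)
    have h5 : y = (N * M) a b * (N a b)⁻¹ := by rw [hent]; field_simp
    rw [h5]
    exact Subfield.mul_mem _ hNMmem (Subfield.inv_mem _ (hNmem a b))
  constructor
  · have hcx : c = x⁻¹ := by rw [hxdef, inv_inv]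
    rw [hcx]; exact Subfield.inv_mem _ hxK
  · have hdx : d = y * x⁻¹ := by rw [hydef, hxdef]; field_simp
    rw [hdx]; exact Subfield.mul_mem _ hyK (Subfield.inv_mem _ hxK)


theorem conj_list_prod {R : Type*} [Ring R] (u : Rˣ) (l : List R) :
    (l.map fun A => (↑u⁻¹ : R) * A * ↑u).prod = ↑u⁻¹ * l.prod * ↑u := by
  induction l with
  | nil => simp
  | cons A l ih =>
      rw [List.map_cons, List.prod_cons, List.prod_cons, ih]
      simp only [mul_assoc, Units.mul_inv_cancel_left]

theorem smul_ofFn_prod {m : ℕ} : ∀ {k : ℕ} (c : Fin k → L)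
    (Mf : Fin k → Matrix (Fin m) (Fin m) L),
    (List.ofFn fun i => c i • Mf i).prod = (∏ i, c i) • (List.ofFn Mf).prod := by
  intro k
  induction k with
  | zero => intro c Mf; simp
  | succ k ih =>
      intro c Mf
      rw [List.ofFn_succ, List.ofFn_succ, List.prod_cons, List.prod_cons,
        ih, Fin.prod_univ_succ, smul_mul_smul_comm]


end KeyLemmas

end JPaux

/-- Let `L/K` be a quadratic field extension and `g 0, ..., g n` pseudoreflections in
`GL n L` (`n > 2`) generating an irreducible group, with ordered product equal to the
scalar `λ₀ ≠ 1` and `det (g i) = λ₀ * λ (i+1)`, where the parameters multiply to `1`,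
none is `1`, and no `λ₀ * λ (i+1)` is `1`.  Assume moreover that for each `g i` the
eigenvalue `1` has geometric multiplicity different from that of any other eigenvalue.
If, after conjugation, every generator is a scalar multiple of a matrix with entries in
a subfield `K'` of `L`, then `λ₀` and all `λ₀ * λ (i+1)` lie in `K'`; in particular, if
the parameters generate `L` then `K' = L`. -/
theorem jp_not_in_smaller_field {K L : Type*} [Field K] [Field L] [Algebra K L]
    (hquad : Module.finrank K L = 2)
    (n : ℕ) (hn : 2 < n) (K' : Subfield L)
    (g : Fin (n + 1) → (Matrix (Fin n) (Fin n) L)ˣ)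
    (lam : Fin (n + 2) → L)
    (hlam_ne_one : ∀ i, lam i ≠ 1)
    (hlam_prod : ∏ i, lam i = 1)
    (hpseudo : ∀ i, ((g i : Matrix (Fin n) (Fin n) L) - 1).rank = 1)
    (hdet : ∀ i : Fin (n + 1), (g i : Matrix (Fin n) (Fin n) L).det = lam 0 * lam i.succ)
    (hprodg : (List.ofFn fun i => (g i : Matrix (Fin n) (Fin n) L)).prod
        = lam 0 • (1 : Matrix (Fin n) (Fin n) L))
    (hlam0 : lam 0 ≠ 1)
    (hlam0i : ∀ i : Fin (n + 1), lam 0 * lam i.succ ≠ 1)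
    (hmult : ∀ i : Fin (n + 1), ∀ μ : L, μ ≠ 1 →
      Module.finrank L (LinearMap.ker
          ((g i : Matrix (Fin n) (Fin n) L).mulVecLin - μ • LinearMap.id)) ≠
        Module.finrank L (LinearMap.ker
          ((g i : Matrix (Fin n) (Fin n) L).mulVecLin - LinearMap.id)))
    (hirr : ∀ W : Submodule L (Fin n → L),
      (∀ i, W.map (g i : Matrix (Fin n) (Fin n) L).mulVecLin ≤ W) → W = ⊥ ∨ W = ⊤)
    (hconj : ∃ P : (Matrix (Fin n) (Fin n) L)ˣ, ∀ i, ∃ (c : L) (M : Matrix (Fin n) (Fin n) L),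
      (∀ a b, M a b ∈ K') ∧
        (↑P⁻¹ : Matrix (Fin n) (Fin n) L) * (g i : Matrix (Fin n) (Fin n) L) * (↑P : Matrix (Fin n) (Fin n) L) = c • M) :
    (lam 0 ∈ K' ∧ ∀ i : Fin (n + 1), lam 0 * lam i.succ ∈ K') ∧
      (Subfield.closure (Set.range lam) = ⊤ → K' = ⊤) := by
  classical
  obtain ⟨P, hP⟩ := hconj
  choose cs Ms hMs hPg using hP
  have hPinvP : (↑P⁻¹ : Matrix (Fin n) (Fin n) L) * (↑P : Matrix (Fin n) (Fin n) L) = 1 :=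
    P.inv_mul
  have hPu : IsUnit (↑P : Matrix (Fin n) (Fin n) L) := ⟨P, rfl⟩
  have hPiu : IsUnit (↑P⁻¹ : Matrix (Fin n) (Fin n) L) := ⟨P⁻¹, rfl⟩
  have hPdet : IsUnit (↑P : Matrix (Fin n) (Fin n) L).det :=
    (Matrix.isUnit_iff_isUnit_det _).mp hPu
  have hPidet : IsUnit (↑P⁻¹ : Matrix (Fin n) (Fin n) L).det :=
    (Matrix.isUnit_iff_isUnit_det _).mp hPiu
  have hlamne : ∀ j, lam j ≠ 0 := by
    intro j hj
    have := hlam_prod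
    rw [Finset.prod_eq_zero (Finset.mem_univ j) hj] at this
    exact one_ne_zero this.symm
  have hkey : ∀ i, cs i ∈ K' ∧ (lam 0 * lam i.succ) ∈ K' := by
    intro i
    refine JPaux.key hn K'
      ((↑P⁻¹ : Matrix (Fin n) (Fin n) L) * (g i : Matrix (Fin n) (Fin n) L)
        * (↑P : Matrix (Fin n) (Fin n) L))
      (Ms i) (cs i) (lam 0 * lam i.succ) (hMs i) (hPg i)
      ?_ ?_ (hlam0i i) (mul_ne_zero (hlamne 0) (hlamne i.succ))
    · have hsub : (↑P⁻¹ : Matrix (Fin n) (Fin n) L) * (g i : Matrix (Fin n) (Fin n) L)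
          * (↑P : Matrix (Fin n) (Fin n) L) - 1
          = (↑P⁻¹ : Matrix (Fin n) (Fin n) L) * ((g i : Matrix (Fin n) (Fin n) L) - 1)
            * (↑P : Matrix (Fin n) (Fin n) L) := by
        simp only [Matrix.mul_sub, Matrix.sub_mul, Matrix.one_mul, Matrix.mul_one]
        rw [hPinvP]
      rw [hsub, Matrix.rank_mul_eq_left_of_isUnit_det _ _ hPdet,
        Matrix.rank_mul_eq_right_of_isUnit_det _ _ hPidet]
      exact hpseudo i
    · rw [Matrix.det_mul, Matrix.det_mul]
      have h1 : (↑P⁻¹ : Matrix (Fin n) (Fin n) L).det * (↑P : Matrix (Fin n) (Fin n) L).det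
          = 1 := by
        rw [← Matrix.det_mul, hPinvP, Matrix.det_one]
      calc (↑P⁻¹ : Matrix (Fin n) (Fin n) L).det * (g i : Matrix (Fin n) (Fin n) L).det
            * (↑P : Matrix (Fin n) (Fin n) L).det
          = ((↑P⁻¹ : Matrix (Fin n) (Fin n) L).det * (↑P : Matrix (Fin n) (Fin n) L).det)
            * (g i : Matrix (Fin n) (Fin n) L).det := by ring
        _ = lam 0 * lam i.succ := by rw [h1, one_mul, hdet i]
  have e0 : Fin n := ⟨0, by omega⟩
  have hlam0K : lam 0 ∈ K' := by
    have h1 : (List.ofFn fun i => (↑P⁻¹ : Matrix (Fin n) (Fin n) L)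
          * (g i : Matrix (Fin n) (Fin n) L) * (↑P : Matrix (Fin n) (Fin n) L))
        = (List.ofFn fun i => (g i : Matrix (Fin n) (Fin n) L)).map
            (fun A => (↑P⁻¹ : Matrix (Fin n) (Fin n) L) * A * (↑P : Matrix (Fin n) (Fin n) L)) := by
      rw [List.map_ofFn]; rfl
    have hprodh : (List.ofFn fun i => (↑P⁻¹ : Matrix (Fin n) (Fin n) L)
        * (g i : Matrix (Fin n) (Fin n) L) * (↑P : Matrix (Fin n) (Fin n) L)).prod
        = lam 0 • 1 := by
      rw [h1, JPaux.conj_list_prod, hprodg, Matrix.mul_smul, Matrix.mul_one, Matrix.smul_mul,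
        hPinvP]
    have h2 : (List.ofFn fun i => (↑P⁻¹ : Matrix (Fin n) (Fin n) L)
          * (g i : Matrix (Fin n) (Fin n) L) * (↑P : Matrix (Fin n) (Fin n) L))
        = List.ofFn fun i => cs i • Ms i := by
      exact congrArg List.ofFn (funext fun i => hPg i)
    rw [h2, JPaux.smul_ofFn_prod] at hprodh
    set Φ : Matrix (Fin n) (Fin n) K' →+* Matrix (Fin n) (Fin n) L :=
      (K'.subtype).mapMatrix with hΦ
    set Ms₀ : Fin (n + 1) → Matrix (Fin n) (Fin n) K' :=
      fun i => Matrix.of fun a b => (⟨Ms i a b, hMs i a b⟩ : K') with hMs₀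
    have h3 : (List.ofFn fun i => Ms i) = (List.ofFn Ms₀).map Φ := by
      rw [List.map_ofFn]
      refine congrArg List.ofFn (funext fun i => ?_)
      ext a b
      rfl
    have h4 : lam 0 = ((lam 0 • (1 : Matrix (Fin n) (Fin n) L)) e0 e0) := by
      rw [Matrix.smul_apply, Matrix.one_apply_eq, smul_eq_mul, mul_one]
    rw [h4, ← hprodh, h3, ← map_list_prod Φ]
    rw [Matrix.smul_apply, smul_eq_mul]
    refine Subfield.mul_mem _ (Subfield.prod_mem _ fun i _ => (hkey i).1) ?_
    have h5 : Φ ((List.ofFn Ms₀).prod) e0 e0 = ((List.ofFn Ms₀).prod e0 e0 : K') := rfl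
    rw [h5]
    exact ((List.ofFn Ms₀).prod e0 e0).2
  refine ⟨⟨hlam0K, fun i => (hkey i).2⟩, ?_⟩
  intro hcl
  have hsub : Set.range lam ⊆ (K' : Set L) := by
    rintro _ ⟨j, rfl⟩
    by_cases hj : j = 0
    · rw [hj]; exact hlam0K
    · obtain ⟨i, rfl⟩ : ∃ i : Fin (n + 1), i.succ = j := by
        rcases Fin.eq_succ_of_ne_zero hj with ⟨i, rfl⟩
        exact ⟨i, rfl⟩
      have heq : lam i.succ = (lam 0)⁻¹ * (lam 0 * lam i.succ) := by
        rw [← mul_assoc, inv_mul_cancel₀ (hlamne 0), one_mul]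
      rw [heq]
      exact Subfield.mul_mem _ (Subfield.inv_mem _ hlam0K) ((hkey i).2)
  have hle : Subfield.closure (Set.range lam) ≤ K' := Subfield.closure_le.mpr hsub
  rw [hcl] at hle
  exact eq_top_iff.mpr hle
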